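/- Let κ be regular and let P be a partial order such that the square P × P is κ-cc. If T is a tree of height κ all of whose levels have size less than κ, and b₀, b₁ are distinct cofinal branches of T, then the set of pairs of conditions deciding different values along the branches yields an antichain in P × P of size κ; consequently a κ-cc-squared forcing cannot add a cofinal branch to a κ-tree. Formally: if T is a κ-tree in the ground model and P × P is κ-cc, then any cofinal branch of T in a P-generic extension already lies in the ground model. -/

import Mathlib

open Cardinal

universe u

/-- Two conditions are compatible if they have a common lower bound. -/
def Compat {P : Type u} [Preorder P] (a b : P) : Prop := ∃ c, c ≤ a ∧ c ≤ b

/-- A partial order is κ-cc if every antichain has cardinality less than κ. -/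
def IsCC (κ : Cardinal.{u}) (P : Type u) [Preorder P] : Prop :=
  ∀ A : Set P, (∀ a ∈ A, ∀ b ∈ A, a ≠ b → ¬ Compat a b) → #A < κ

/-- A κ-tree: a partial order in which the set of predecessors of every node is
well-ordered (witnessed by the level function `lvl`), of height κ, with all
levels of size less than κ. -/
structure KTree (κ : Cardinal.{u}) where
  carrier : Type u
  po : PartialOrder carrier
  lvl : carrier → Ordinal.{u}
  lvl_lt : ∀ t, lvl t < κ.ord
  lvl_strictMono : ∀ s t, po.lt s t → lvl s < lvl t
  preds : ∀ t, ∀ β < lvl t, ∃! s, po.lt s t ∧ lvl s = β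
  levels_nonempty : ∀ β < κ.ord, ∃ t, lvl t = β
  levels_small : ∀ β, #{t // lvl t = β} < κ

/-- A cofinal branch: a chain of the tree meeting every level. -/
def IsCofBranch {κ : Cardinal.{u}} (S : KTree κ) (b : Set S.carrier) : Prop :=
  (∀ s ∈ b, ∀ t ∈ b, S.po.le s t ∨ S.po.le t s) ∧ ∀ β < κ.ord, ∃ t ∈ b, S.lvl t = β

/-- A `P`-name for a cofinal branch of the tree `S`: `F p t` states that the
condition `p` forces `t` to belong to the named branch. Stronger conditions
force more, any condition forces the named object to be a chain, and densely
many conditions force some node of each level into the branch. -/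
structure BranchName (P : Type u) [Preorder P] {κ : Cardinal.{u}} (S : KTree κ) where
  F : P → S.carrier → Prop
  mono : ∀ p q t, p ≤ q → F q t → F p t
  forcesChain : ∀ p s t, F p s → F p t → S.po.le s t ∨ S.po.le t s
  cof : ∀ p : P, ∀ β < κ.ord, ∃ q, q ≤ p ∧ ∃ t, S.lvl t = β ∧ F q t

/-! ### Auxiliary tree lemmas -/

/-- In a tree, two nodes below a common node are comparable. -/
theorem KTree.pred_comparable {κ : Cardinal.{u}} (S : KTree κ) {s t u : S.carrier}
    (hs : S.po.lt s u) (ht : S.po.lt t u) : S.po.le s t ∨ S.po.le t s := by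
  letI : PartialOrder S.carrier := S.po
  -- a helper: if lvl s ≤ lvl t then s ≤ t
  have key : ∀ s t : S.carrier, S.po.lt s u → S.po.lt t u → S.lvl s ≤ S.lvl t →
      S.po.le s t := by
    intro s t hs ht hle
    rcases eq_or_lt_of_le hle with he | hl
    · obtain ⟨w, -, hw⟩ := S.preds u (S.lvl s) (S.lvl_strictMono s u hs)
      have h1 : s = w := hw s ⟨hs, rfl⟩
      have h2 : t = w := hw t ⟨ht, he.symm⟩
      exact le_of_eq (h1.trans h2.symm)
    · obtain ⟨w, ⟨hwlt, hwlvl⟩, -⟩ := S.preds t (S.lvl s) hl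
      have hwu : S.po.lt w u := lt_trans hwlt ht
      obtain ⟨w', -, hw'⟩ := S.preds u (S.lvl s) (S.lvl_strictMono s u hs)
      have h1 : w = w' := hw' w ⟨hwu, hwlvl⟩
      have h2 : s = w' := hw' s ⟨hs, rfl⟩
      exact le_of_lt (h2.trans h1.symm ▸ hwlt)
  rcases le_total (S.lvl s) (S.lvl t) with h | h
  · exact Or.inl (key s t hs ht h)
  · exact Or.inr (key t s ht hs h)

/-- Comparable nodes on the same level are equal. -/
theorem KTree.eq_of_le_lvl_eq {κ : Cardinal.{u}} (S : KTree κ) {s t : S.carrier}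
    (h : S.po.le s t) (hl : S.lvl s = S.lvl t) : s = t := by
  letI : PartialOrder S.carrier := S.po
  by_contra hne
  exact absurd (S.lvl_strictMono s t (lt_of_le_of_ne h hne)) (by rw [hl]; exact lt_irrefl _)

/-- Two nodes forced by the same condition with strictly increasing levels are
strictly comparable. -/
theorem BranchName.forced_lt {κ : Cardinal.{u}} {P : Type u} [Preorder P] {S : KTree κ}
    (N : BranchName P S) {p : P} {s t : S.carrier} (hs : N.F p s) (ht : N.F p t)
    (h : S.lvl s < S.lvl t) : S.po.lt s t := by
  letI : PartialOrder S.carrier := S.po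
  rcases N.forcesChain p s t hs ht with hle | hle
  · exact lt_of_le_of_ne hle (by rintro rfl; exact lt_irrefl _ h)
  · rcases eq_or_lt_of_le hle with he | hlt
    · subst he; exact absurd h (lt_irrefl _)
    · exact absurd h (lt_asymm (S.lvl_strictMono t s hlt))

/-- Transfinite iteration producing, for any function `h` on ordinals, a
function `e` with `e α = blsub_{γ<α} (h (e γ) + 1)`-like behaviour:
`e α` is the least strict upper bound of `h (e γ)` for `γ < α`. -/
noncomputable def iterLevels (h : Ordinal.{u} → Ordinal.{u}) (α : Ordinal.{u}) : Ordinal.{u} :=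
  Ordinal.blsub.{u, u} α (fun γ _ => h (iterLevels h γ))
termination_by α
decreasing_by assumption

theorem iterLevels_def (h : Ordinal.{u} → Ordinal.{u}) (α : Ordinal.{u}) :
    iterLevels h α = Ordinal.blsub.{u, u} α (fun γ _ => h (iterLevels h γ)) := by
  rw [iterLevels]

/-- The square-cc branch lemma: if `P × P` is κ-cc and `T` is a κ-tree in the
ground model, then any cofinal branch of `T` in a `P`-generic extension already
lies in the ground model, i.e. below any condition there is a condition forcing
the named branch to be contained in a ground-model cofinal branch. -/
theorem square_cc_no_new_branch {κ : Cardinal.{u}} (hreg : κ.IsRegular)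
    {P : Type u} [PartialOrder P] (hcc : IsCC κ (P × P))
    (S : KTree κ) (N : BranchName P S) :
    ∀ p : P, ∃ q, q ≤ p ∧ ∃ b : Set S.carrier, IsCofBranch S b ∧
      ∀ r, r ≤ q → ∀ t, N.F r t → t ∈ b := by
  intro p
  by_cases hsp : ∃ q, q ≤ p ∧ ∀ q₀, q₀ ≤ q → ∀ q₁, q₁ ≤ q → ∀ t₀ t₁,
      N.F q₀ t₀ → N.F q₁ t₁ → (S.po.le t₀ t₁ ∨ S.po.le t₁ t₀)
  · -- no splitting below some q: the forced nodes form a ground-model branch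
    obtain ⟨q, hqp, hq⟩ := hsp
    refine ⟨q, hqp, {t | ∃ r, r ≤ q ∧ N.F r t}, ⟨?_, ?_⟩, ?_⟩
    · rintro s ⟨r, hr, hfs⟩ t ⟨r', hr', hft⟩
      exact hq r hr r' hr' s t hfs hft
    · intro β hβ
      obtain ⟨q', hq', t, hlvl, hf⟩ := N.cof q β hβ
      exact ⟨t, ⟨q', hq', hf⟩, hlvl⟩
    · intro r hr t hf
      exact ⟨r, hr, hf⟩
  · -- splitting everywhere below p: build a κ-sized antichain in P × P
    exfalso
    push_neg at hsp
    -- Stage lemma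
    have stage : ∀ δ : Ordinal.{u}, δ < κ.ord → ∃ (q₀ q₁ : P) (β : Ordinal.{u})
        (u v w : S.carrier),
        q₀ ≤ p ∧ q₁ ≤ p ∧ δ < β ∧ β < κ.ord ∧ S.lvl u = β ∧ S.lvl v = β ∧ u ≠ v ∧
        S.lvl w = δ ∧ N.F q₀ u ∧ N.F q₁ v ∧ N.F q₀ w ∧ N.F q₁ w := by
      intro δ hδ
      obtain ⟨q, hqp, w, hwlvl, hFw⟩ := N.cof p δ hδ
      obtain ⟨q₀', hq₀'q, q₁', hq₁'q, t₀, t₁, hFt₀, hFt₁, hnc⟩ := hsp q hqp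
      set M := max δ (max (S.lvl t₀) (S.lvl t₁)) with hM_def
      have hM : M < κ.ord := max_lt hδ (max_lt (S.lvl_lt t₀) (S.lvl_lt t₁))
      have hβκ : Order.succ M < κ.ord := (Cardinal.isSuccLimit_ord hreg.1).succ_lt hM
      obtain ⟨q₀, hq₀, u, hulvl, hFu⟩ := N.cof q₀' (Order.succ M) hβκ
      obtain ⟨q₁, hq₁, v, hvlvl, hFv⟩ := N.cof q₁' (Order.succ M) hβκ
      have hδβ : δ < Order.succ M := (le_max_left _ _).trans_lt (Order.lt_succ M)
      have hq₀q : q₀ ≤ q := hq₀.trans hq₀'q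
      have hq₁q : q₁ ≤ q := hq₁.trans hq₁'q
      refine ⟨q₀, q₁, Order.succ M, u, v, w, hq₀q.trans hqp, hq₁q.trans hqp,
        hδβ, hβκ, hulvl, hvlvl, ?_, hwlvl,
        hFu, hFv, N.mono _ _ _ hq₀q hFw, N.mono _ _ _ hq₁q hFw⟩
      intro huv
      have hFt₀' : N.F q₀ t₀ := N.mono _ _ _ hq₀ hFt₀
      have hFt₁' : N.F q₁ t₁ := N.mono _ _ _ hq₁ hFt₁
      have ht₀u : S.po.lt t₀ u := N.forced_lt hFt₀' hFu (by
        rw [hulvl]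
        exact ((le_max_left _ _).trans (le_max_right _ _)).trans_lt (Order.lt_succ M))
      have ht₁v : S.po.lt t₁ v := N.forced_lt hFt₁' hFv (by
        rw [hvlvl]
        exact ((le_max_right _ _).trans (le_max_right _ _)).trans_lt (Order.lt_succ M))
      rw [← huv] at ht₁v
      rcases S.pred_comparable ht₀u ht₁v with hle | hle
      · exact hnc.1 hle
      · exact hnc.2 hle
    choose Q₀ Q₁ B U V W hQ₀p hQ₁p hδB hBκ hU hV hUV hW hFU hFV hFW₀ hFW₁ using stage
    -- core incompatibility
    have core : ∀ (δ δ' : Ordinal.{u}) (hδ : δ < κ.ord) (hδ' : δ' < κ.ord),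
        B δ hδ < δ' → ∀ r s : P, r ≤ Q₀ δ hδ → s ≤ Q₁ δ hδ →
        r ≤ Q₀ δ' hδ' → s ≤ Q₁ δ' hδ' → False := by
      intro δ δ' hδ hδ' hBδ' r s hr hs hr' hs'
      have h1 : N.F r (U δ hδ) := N.mono _ _ _ hr (hFU δ hδ)
      have h2 : N.F r (W δ' hδ') := N.mono _ _ _ hr' (hFW₀ δ' hδ')
      have h3 : N.F s (V δ hδ) := N.mono _ _ _ hs (hFV δ hδ)
      have h4 : N.F s (W δ' hδ') := N.mono _ _ _ hs' (hFW₁ δ' hδ')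
      have hlt1 : S.po.lt (U δ hδ) (W δ' hδ') :=
        N.forced_lt h1 h2 (by rw [hU, hW]; exact hBδ')
      have hlt2 : S.po.lt (V δ hδ) (W δ' hδ') :=
        N.forced_lt h3 h4 (by rw [hV, hW]; exact hBδ')
      have hlvlUV : S.lvl (U δ hδ) = S.lvl (V δ hδ) := by rw [hU, hV]
      rcases S.pred_comparable hlt1 hlt2 with hle | hle
      · exact hUV δ hδ (S.eq_of_le_lvl_eq hle hlvlUV)
      · exact hUV δ hδ (S.eq_of_le_lvl_eq hle hlvlUV.symm).symm
    -- the recursion on levels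
    set h : Ordinal.{u} → Ordinal.{u} :=
      fun δ => if hδ : δ < κ.ord then B δ hδ else 0 with h_def
    set e : Ordinal.{u} → Ordinal.{u} := iterLevels h with e_def
    have he_lt : ∀ α, α < κ.ord → e α < κ.ord := by
      intro α
      induction α using Ordinal.induction with
      | _ α ih =>
        intro hα
        rw [e_def, iterLevels_def]
        apply Ordinal.blsub_lt_ord
        · rw [hreg.cof_eq]
          exact Cardinal.lt_ord.mp hα
        · intro γ hγ
          have heγ : e γ < κ.ord := ih γ hγ (hγ.trans hα)
          rw [h_def]
          dsimp only
          rw [dif_pos heγ]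
          exact hBκ _ heγ
    have hkey : ∀ γ α, γ < α → α < κ.ord → ∀ (hγ : γ < κ.ord),
        B (e γ) (he_lt γ hγ) < e α := by
      intro γ α hγα hα hγ
      have := Ordinal.lt_blsub (fun γ' (_ : γ' < α) => h (e γ')) γ hγα
      rw [← iterLevels_def, ← e_def] at this
      have hh : h (e γ) = B (e γ) (he_lt γ hγ) := by
        rw [h_def]; dsimp only; rw [dif_pos (he_lt γ hγ)]
      rwa [hh] at this
    -- the antichain
    set pf : ∀ α : Ordinal.{u}, α < κ.ord → P × P :=
      fun α hα => (Q₀ (e α) (he_lt α hα), Q₁ (e α) (he_lt α hα)) with pf_def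
    have core2 : ∀ (γ α : Ordinal.{u}) (hγ : γ < κ.ord) (hα : α < κ.ord), γ < α →
        ∀ x : P × P, x ≤ pf γ hγ → x ≤ pf α hα → False := by
      intro γ α hγ hα hγα x hxγ hxα
      exact core (e γ) (e α) (he_lt γ hγ) (he_lt α hα) (hkey γ α hγα hα hγ)
        x.1 x.2 hxγ.1 hxγ.2 hxα.1 hxα.2
    set A : Set (P × P) := {x | ∃ (α : Ordinal.{u}) (hα : α < κ.ord), x = pf α hα}
      with A_def
    have hanti : ∀ a ∈ A, ∀ b ∈ A, a ≠ b → ¬ Compat a b := by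
      rintro a ⟨α, hα, rfl⟩ b ⟨α', hα', rfl⟩ hne ⟨c, hc1, hc2⟩
      rcases lt_trichotomy α α' with hlt | heq | hlt
      · exact core2 α α' hα hα' hlt c hc1 hc2
      · subst heq; exact hne rfl
      · exact core2 α' α hα' hα hlt c hc2 hc1
    have hA : #A < κ := hcc A hanti
    -- but A has size at least κ
    set ti : κ.ord.ToType → Ordinal.{u} :=
      fun i => ((Ordinal.ToType.mk (o := κ.ord)).symm i).1 with ti_def
    have hti_lt : ∀ i, ti i < κ.ord := fun i => ((Ordinal.ToType.mk (o := κ.ord)).symm i).2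
    have hti_inj : Function.Injective ti :=
      Subtype.val_injective.comp (Ordinal.ToType.mk (o := κ.ord)).symm.injective
    have hinj : Function.Injective (fun i : κ.ord.ToType =>
        (⟨pf (ti i) (hti_lt i), ⟨_, hti_lt i, rfl⟩⟩ : A)) := by
      intro i j hij
      by_contra hne
      have htne : ti i ≠ ti j := fun hh => hne (hti_inj hh)
      have heq : pf (ti i) (hti_lt i) = pf (ti j) (hti_lt j) :=
        congrArg Subtype.val hij
      rcases lt_or_gt_of_ne htne with hlt | hlt
      · exact core2 _ _ (hti_lt i) (hti_lt j) hlt (pf _ (hti_lt i)) le_rfl (le_of_eq heq)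
      · exact core2 _ _ (hti_lt j) (hti_lt i) hlt (pf _ (hti_lt i)) (le_of_eq heq) le_rfl
    have hge : κ ≤ #A := by
      calc κ = κ.ord.card := (Cardinal.card_ord κ).symm
        _ = #κ.ord.ToType := (Cardinal.mk_toType κ.ord).symm
        _ ≤ #A := Cardinal.mk_le_of_injective hinj
    exact absurd hA (not_lt.2 hge)
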